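/- Let G_• be a filtered group, k ≥ 0, and fix an ordering S_1 = ∅, ..., S_{2^k} = [k] of the subsets of [k] that respects inclusion. Then every configuration (g_ω) ∈ G^{{0,1}^k} has a unique representation as the ordered product ∏_{i=1}^{2^k} [x_i]_{F_{S_i}} with x_i ∈ G, and (g_ω) lies in HK^k(G_•) if and only if x_i ∈ G_{|S_i|} for all i. -/

import Mathlib

open Subgroup

/-- A filtration on a group `G`: a chain `G = G₀ ⊇ G₁ ⊇ ...` of subgroups with
`[Gᵢ, Gⱼ] ⊆ G_{i+j}` for all `i j`. -/
structure IsGroupFiltration {G : Type*} [Group G] (Gf : ℕ → Subgroup G) : Prop where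
  top : Gf 0 = ⊤
  mono : ∀ i, Gf (i + 1) ≤ Gf i
  comm : ∀ i j, ⁅Gf i, Gf j⁆ ≤ Gf (i + j)

/-- The top vertex `(1,…,1)` of the discrete cube `{0,1}^k`. -/
def topVert (k : ℕ) : Fin k → Bool := fun _ => true

/-- The configuration `[x]_{F_S}`: equal to `x` on the upper face `F_S = {ω : ω ⊇ S}`
and the identity elsewhere. -/
def upperFaceConfig {G : Type*} [Group G] {k : ℕ} (S : Finset (Fin k)) (x : G) :
    (Fin k → Bool) → G :=
  fun ω => if ∀ i ∈ S, ω i = true then x else 1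

/-- The Host–Kra cube group `HK^k(G_•)`: the subgroup of `G^{{0,1}^k}` generated by the
configurations `[x]_{F_S}` with `x ∈ G_{|S|}`. -/
def hostKra {G : Type*} [Group G] (Gf : ℕ → Subgroup G) (k : ℕ) :
    Subgroup ((Fin k → Bool) → G) :=
  Subgroup.closure { c | ∃ (S : Finset (Fin k)) (x : G), x ∈ Gf S.card ∧ c = upperFaceConfig S x }

open scoped commutatorElement

namespace HKaux

variable {G : Type*} [Group G] {k n : ℕ}

/-- The subset of `[k]` attached to a vertex. -/
def wset (ω : Fin k → Bool) : Finset (Fin k) := Finset.univ.filter (fun i => ω i = true)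

/-- The vertex attached to a subset of `[k]`. -/
def vert (T : Finset (Fin k)) : Fin k → Bool := fun i => decide (i ∈ T)

lemma wset_vert (T : Finset (Fin k)) : wset (vert T) = T := by
  ext i; simp [wset, vert]

lemma vert_wset (ω : Fin k → Bool) : vert (wset ω) = ω := by
  funext i; simp [wset, vert]

lemma uf_apply (S : Finset (Fin k)) (x : G) (ω : Fin k → Bool) :
    upperFaceConfig S x ω = if S ⊆ wset ω then x else 1 := by
  have h : (∀ i ∈ S, ω i = true) ↔ S ⊆ wset ω := by
    simp [wset, Finset.subset_iff]
  unfold upperFaceConfig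
  rw [if_congr h rfl rfl]

lemma uf_mul (S : Finset (Fin k)) (x y : G) :
    upperFaceConfig S x * upperFaceConfig S y = upperFaceConfig S (x * y) := by
  funext ω
  simp only [Pi.mul_apply, upperFaceConfig]
  split <;> simp

lemma uf_inv (S : Finset (Fin k)) (x : G) :
    (upperFaceConfig S x)⁻¹ = upperFaceConfig S x⁻¹ := by
  funext ω
  simp only [Pi.inv_apply, upperFaceConfig]
  split <;> simp

lemma uf_one (S : Finset (Fin k)) : upperFaceConfig S (1 : G) = 1 := by
  funext ω
  simp only [upperFaceConfig, Pi.one_apply]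
  split <;> rfl

lemma uf_comm (S T : Finset (Fin k)) (x y : G) :
    ⁅upperFaceConfig S x, upperFaceConfig T y⁆ = upperFaceConfig (S ∪ T) ⁅x, y⁆ := by
  funext ω
  simp only [commutatorElement_def, Pi.mul_apply, Pi.inv_apply, upperFaceConfig]
  by_cases hS : ∀ i ∈ S, ω i = true <;> by_cases hT : ∀ i ∈ T, ω i = true
  · rw [if_pos hS, if_pos hT, if_pos (Finset.forall_mem_union.mpr ⟨hS, hT⟩)]
  · rw [if_pos hS, if_neg hT,
      if_neg (fun h => hT (fun i hi => (Finset.forall_mem_union.mp h).2 i hi))]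
    simp
  · rw [if_neg hS, if_pos hT,
      if_neg (fun h => hS (fun i hi => (Finset.forall_mem_union.mp h).1 i hi))]
    simp
  · rw [if_neg hS, if_neg hT,
      if_neg (fun h => hS (fun i hi => (Finset.forall_mem_union.mp h).1 i hi))]
    simp

/-- The `a`-th factor of the canonical product, as an element of `G`, at a vertex whose
subset is `T`. -/
def trm (e : Fin n → Finset (Fin k)) (x : Fin n → G) (T : Finset (Fin k)) (a : ℕ) : G :=
  if h : a < n then (if e ⟨a, h⟩ ⊆ T then x ⟨a, h⟩ else 1) else 1

/-- Partial products of the `trm`s. -/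
def Pp (e : Fin n → Finset (Fin k)) (x : Fin n → G) (T : Finset (Fin k)) (m : ℕ) : G :=
  ((List.range m).map (trm e x T)).prod

/-- The `a`-th factor of the canonical product, as a configuration. -/
def cf (e : Fin n → Finset (Fin k)) (x : Fin n → G) (a : ℕ) : (Fin k → Bool) → G :=
  if h : a < n then upperFaceConfig (e ⟨a, h⟩) (x ⟨a, h⟩) else 1

/-- The canonical ordered product. -/
def prodE (e : Fin n → Finset (Fin k)) (x : Fin n → G) : (Fin k → Bool) → G :=
  ((List.range n).map (cf e x)).prod

lemma ofFn_eq (e : Fin n → Finset (Fin k)) (x : Fin n → G) :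
    (List.ofFn fun i => upperFaceConfig (e i) (x i)) = (List.range n).map (cf e x) := by
  rw [List.ofFn_eq_map, ← List.map_coe_finRange_eq_range, List.map_map]
  congr 1
  funext i
  simp [cf, Function.comp]

lemma cf_apply (e : Fin n → Finset (Fin k)) (x : Fin n → G) (a : ℕ) (ω : Fin k → Bool) :
    cf e x a ω = trm e x (wset ω) a := by
  unfold cf trm
  split
  · exact uf_apply _ _ _
  · rfl

lemma prodE_apply (e : Fin n → Finset (Fin k)) (x : Fin n → G) (ω : Fin k → Bool) :
    prodE e x ω = Pp e x (wset ω) n := by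
  rw [prodE, Pi.list_prod_apply, List.map_map]
  unfold Pp
  refine congrArg List.prod (List.map_congr_left ?_)
  intro a _
  exact cf_apply e x a ω

lemma Pp_succ (e : Fin n → Finset (Fin k)) (x : Fin n → G) (T : Finset (Fin k)) (m : ℕ) :
    Pp e x T (m + 1) = Pp e x T m * trm e x T m := by
  simp [Pp, List.range_succ]

lemma trm_high (e : Fin n → Finset (Fin k)) (he : ∀ i j : Fin n, e i ⊆ e j → i ≤ j)
    (x : Fin n → G) {j : Fin n} {a : ℕ} (ha : j.val < a) : trm e x (e j) a = 1 := by
  unfold trm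
  split
  · rw [if_neg]
    intro hsub
    have := he _ j hsub
    rw [Fin.le_def] at this
    simp only [] at this
    omega
  · rfl

lemma Pp_stable (e : Fin n → Finset (Fin k)) (he : ∀ i j : Fin n, e i ⊆ e j → i ≤ j)
    (x : Fin n → G) (j : Fin n) (m : ℕ) (hm : j.val + 1 ≤ m) :
    Pp e x (e j) m = Pp e x (e j) (j.val + 1) := by
  induction m, hm using Nat.le_induction with
  | base => rfl
  | succ m hm ih => rw [Pp_succ, trm_high e he x (by omega), mul_one, ih]

lemma Pp_last (e : Fin n → Finset (Fin k)) (x : Fin n → G) (j : Fin n) :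
    Pp e x (e j) (j.val + 1) = Pp e x (e j) j.val * x j := by
  rw [Pp_succ]
  congr 1
  unfold trm
  rw [dif_pos j.isLt, if_pos (by simp)]

lemma eval_at (e : Fin n → Finset (Fin k)) (he : ∀ i j : Fin n, e i ⊆ e j → i ≤ j)
    (x : Fin n → G) (j : Fin n) :
    prodE e x (vert (e j)) = Pp e x (e j) j.val * x j := by
  rw [prodE_apply, wset_vert, Pp_stable e he x j n j.isLt, Pp_last]

lemma Pp_congr (e : Fin n → Finset (Fin k)) {x y : Fin n → G} (T : Finset (Fin k)) (m : ℕ)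
    (hxy : ∀ (a : ℕ) (h : a < n), a < m → x ⟨a, h⟩ = y ⟨a, h⟩) :
    Pp e x T m = Pp e y T m := by
  induction m with
  | zero => rfl
  | succ m ih =>
    rw [Pp_succ, Pp_succ, ih (fun a h ha => hxy a h (by omega))]
    congr 1
    unfold trm
    split
    · rw [hxy m ‹_› (by omega)]
    · rfl

/-- The solution of the triangular system, defined by strong recursion. -/
def solveN (e : Fin n → Finset (Fin k)) (g : (Fin k → Bool) → G) : ℕ → G
  | m =>
    if h : m < n then
      (Pp e (fun i => if hi : i.val < m then solveN e g i.val else 1) (e ⟨m, h⟩) m)⁻¹ *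
        g (vert (e ⟨m, h⟩))
    else 1
  termination_by m => m
  decreasing_by exact hi

/-- The solution as a function on `Fin n`. -/
def slv (e : Fin n → Finset (Fin k)) (g : (Fin k → Bool) → G) : Fin n → G :=
  fun j => solveN e g j.val

lemma slv_spec (e : Fin n → Finset (Fin k)) (g : (Fin k → Bool) → G) (j : Fin n) :
    Pp e (slv e g) (e j) j.val * slv e g j = g (vert (e j)) := by
  conv_lhs => rw [slv, solveN]
  rw [dif_pos j.isLt]
  have hPp : Pp e (fun i => if hi : i.val < j.val then solveN e g i.val else 1) (e ⟨j.val, j.isLt⟩)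
      j.val = Pp e (slv e g) (e ⟨j.val, j.isLt⟩) j.val := by
    apply Pp_congr
    intro a h ha
    simp only [dif_pos ha]
    rfl
  have hj : (⟨j.val, j.isLt⟩ : Fin n) = j := by simp
  rw [hPp, hj]
  group

lemma exists_repr (e : Fin n → Finset (Fin k)) (he : ∀ i j : Fin n, e i ⊆ e j → i ≤ j)
    (hsurj : Function.Surjective e) (g : (Fin k → Bool) → G) :
    g = prodE e (slv e g) := by
  funext ω
  obtain ⟨j, hj⟩ := hsurj (wset ω)
  have hω : ω = vert (e j) := by rw [hj, vert_wset]
  rw [hω, eval_at e he _ j, slv_spec]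

lemma prodE_inj (e : Fin n → Finset (Fin k)) (he : ∀ i j : Fin n, e i ⊆ e j → i ≤ j)
    {x y : Fin n → G} (hxy : prodE e x = prodE e y) : x = y := by
  have H : ∀ m : ℕ, ∀ j : Fin n, j.val = m → x j = y j := by
    intro m
    induction m using Nat.strong_induction_on with
    | _ m ih =>
      intro j hj
      have h1 := congrFun hxy (vert (e j))
      rw [eval_at e he x j, eval_at e he y j] at h1
      have h2 : Pp e x (e j) j.val = Pp e y (e j) j.val :=
        Pp_congr e _ _ (fun a h ha => ih a (by omega) ⟨a, h⟩ rfl)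
      rw [h2] at h1
      exact mul_left_cancel h1
  funext j
  exact H j.val j rfl

section Filtered

variable (Gf : ℕ → Subgroup G)

/-- A coefficient vector compatible with the filtration. -/
def valid (e : Fin n → Finset (Fin k)) (x : Fin n → G) : Prop :=
  ∀ i, x i ∈ Gf (e i).card

/-- The set of configurations obtained as canonical products with filtered coefficients. -/
def Pmem (e : Fin n → Finset (Fin k)) (g : (Fin k → Bool) → G) : Prop :=
  ∃ x, valid Gf e x ∧ g = prodE e x

/-- Generator-type configurations. -/
def Gen (e : Fin n → Finset (Fin k)) (a : (Fin k → Bool) → G) : Prop :=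
  ∃ (j : Fin n) (z : G), z ∈ Gf (e j).card ∧ a = upperFaceConfig (e j) z

/-- Generator-type configurations of index strictly greater than `j`. -/
def HiGen (e : Fin n → Finset (Fin k)) (j : Fin n) (a : (Fin k → Bool) → G) : Prop :=
  ∃ (m : Fin n) (c : G), j < m ∧ c ∈ Gf (e m).card ∧ a = upperFaceConfig (e m) c

variable {Gf}

lemma comm_mem (hf : IsGroupFiltration Gf) {a b c : ℕ} {z w : G} (hz : z ∈ Gf a) (hw : w ∈ Gf b)
    (hc : c ≤ a + b) : ⁅z, w⁆ ∈ Gf c :=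
  (antitone_nat_of_succ_le hf.mono) hc (hf.comm a b (commutator_mem_commutator hz hw))

variable {e : Fin n → Finset (Fin k)}

lemma swap_single (hf : IsGroupFiltration Gf) (he : ∀ i j : Fin n, e i ⊆ e j → i ≤ j)
    (hsurj : Function.Surjective e) {j m : Fin n} (hjm : j < m) {z c : G}
    (hz : z ∈ Gf (e j).card) (hc : c ∈ Gf (e m).card) :
    ∃ (m' : Fin n) (c' : G), j < m' ∧ c' ∈ Gf (e m').card ∧
      upperFaceConfig (e m) c * upperFaceConfig (e j) z =
        upperFaceConfig (e j) z * upperFaceConfig (e m) c * upperFaceConfig (e m') c' := by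
  obtain ⟨m', hm'⟩ := hsurj (e m ∪ e j)
  refine ⟨m', ⁅c⁻¹, z⁻¹⁆, ?_, ?_, ?_⟩
  · exact lt_of_lt_of_le hjm (he m m' (hm' ▸ Finset.subset_union_left))
  · exact comm_mem hf (inv_mem hc) (inv_mem hz)
      (hm' ▸ Finset.card_union_le (e m) (e j))
  · rw [hm', ← uf_comm, ← uf_inv, ← uf_inv]
    simp only [commutatorElement_def]
    group

lemma swap_list (hf : IsGroupFiltration Gf) (he : ∀ i j : Fin n, e i ⊆ e j → i ≤ j)
    (hsurj : Function.Surjective e) {j : Fin n} {z : G} (hz : z ∈ Gf (e j).card)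
    (M : List ((Fin k → Bool) → G)) (hM : ∀ a ∈ M, HiGen Gf e j a) :
    ∃ L : List ((Fin k → Bool) → G), (∀ a ∈ L, HiGen Gf e j a) ∧
      M.prod * upperFaceConfig (e j) z = upperFaceConfig (e j) z * L.prod := by
  induction M with
  | nil => exact ⟨[], by simp, by simp⟩
  | cons a M ih =>
    obtain ⟨L', hL', hprod⟩ := ih (fun b hb => hM b (List.mem_cons_of_mem _ hb))
    obtain ⟨m, c, hjm, hc, rfl⟩ := hM a List.mem_cons_self
    obtain ⟨m', c', hjm', hc', heq⟩ := swap_single hf he hsurj hjm hz hc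
    refine ⟨upperFaceConfig (e m) c :: upperFaceConfig (e m') c' :: L', ?_, ?_⟩
    · intro b hb
      rcases List.mem_cons.mp hb with rfl | hb
      · exact ⟨m, c, hjm, hc, rfl⟩
      rcases List.mem_cons.mp hb with rfl | hb
      · exact ⟨m', c', hjm', hc', rfl⟩
      · exact hL' b hb
    · rw [List.prod_cons, mul_assoc, hprod, ← mul_assoc, heq, List.prod_cons, List.prod_cons]
      simp [mul_assoc]

lemma Pmem_mul_uf (hf : IsGroupFiltration Gf) (he : ∀ i j : Fin n, e i ⊆ e j → i ≤ j)
    (hsurj : Function.Surjective e) :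
    ∀ (d : ℕ) (j : Fin n), n - j.val ≤ d → ∀ z ∈ Gf (e j).card,
      ∀ p, Pmem Gf e p → Pmem Gf e (p * upperFaceConfig (e j) z) := by
  intro d
  induction d with
  | zero => intro j hd; have := j.isLt; omega
  | succ d ihd =>
    intro j hd z hz p hp
    -- right multiplication by lists of high generators preserves Pmem
    have highmul : ∀ (L : List ((Fin k → Bool) → G)), (∀ a ∈ L, HiGen Gf e j a) →
        ∀ q, Pmem Gf e q → Pmem Gf e (q * L.prod) := by
      intro L
      induction L with
      | nil => intro _ q hq; simpa using hq
      | cons a L ihL =>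
        intro hL q hq
        obtain ⟨m, c, hjm, hc, rfl⟩ := hL a List.mem_cons_self
        rw [List.prod_cons, ← mul_assoc]
        refine ihL (fun b hb => hL b (List.mem_cons_of_mem _ hb)) _ ?_
        refine ihd m ?_ c hc q hq
        have := Fin.lt_def.mp hjm
        omega
    obtain ⟨x, hx, rfl⟩ := hp
    -- split the product at position j
    have hsplit : prodE e x =
        (((List.range (j.val + 1)).map (cf e x)).prod) *
          (((List.range (n - (j.val + 1))).map (fun b => cf e x (j.val + 1 + b))).prod) := by
      have h1 : n = (j.val + 1) + (n - (j.val + 1)) := by have := j.isLt; omega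
      have h2 : List.range n = List.range (j.val + 1) ++
          (List.range (n - (j.val + 1))).map (fun b => j.val + 1 + b) := by
        conv_lhs => rw [h1]
        exact List.range_add
      rw [prodE, h2, List.map_append, List.prod_append, List.map_map]
      rfl
    set M : List ((Fin k → Bool) → G) :=
      (List.range (n - (j.val + 1))).map (fun b => cf e x (j.val + 1 + b)) with hMdef
    have hM : ∀ a ∈ M, HiGen Gf e j a := by
      intro a ha
      rw [hMdef] at ha
      obtain ⟨b, hb, rfl⟩ := List.mem_map.mp ha
      rw [List.mem_range] at hb
      have hlt : j.val + 1 + b < n := by have := j.isLt; omega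
      refine ⟨⟨j.val + 1 + b, hlt⟩, x ⟨j.val + 1 + b, hlt⟩, ?_, hx _, ?_⟩
      · exact (by omega : j.val < j.val + 1 + b)
      · simp [cf, hlt]
    obtain ⟨L, hL, hswap⟩ := swap_list hf he hsurj hz M hM
    -- the front part with the merged coefficient
    set x' : Fin n → G := fun i => if i < j then x i else if i = j then x j * z else 1 with hx'def
    have hx' : valid Gf e x' := by
      intro i
      simp only [hx'def]
      split
      · exact hx i
      split
      · rename_i h1 h2; rw [h2]; exact mul_mem (hx j) hz
      · exact one_mem _
    have hfront : ((List.range (j.val + 1)).map (cf e x)).prod * upperFaceConfig (e j) z =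
        prodE e x' := by
      have hsplit' : prodE e x' =
          (((List.range (j.val + 1)).map (cf e x')).prod) *
            (((List.range (n - (j.val + 1))).map (fun b => cf e x' (j.val + 1 + b))).prod) := by
        have h1 : n = (j.val + 1) + (n - (j.val + 1)) := by have := j.isLt; omega
        have h2 : List.range n = List.range (j.val + 1) ++
            (List.range (n - (j.val + 1))).map (fun b => j.val + 1 + b) := by
          conv_lhs => rw [h1]
          exact List.range_add
        rw [prodE, h2, List.map_append, List.prod_append, List.map_map]
        rfl
      have htail : (((List.range (n - (j.val + 1))).map
          (fun b => cf e x' (j.val + 1 + b))).prod) = 1 := by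
        apply List.prod_eq_one
        intro a ha
        obtain ⟨b, hb, rfl⟩ := List.mem_map.mp ha
        rw [List.mem_range] at hb
        have hlt : j.val + 1 + b < n := by have := j.isLt; omega
        have hx'1 : x' ⟨j.val + 1 + b, hlt⟩ = 1 := by
          simp only [hx'def]
          rw [if_neg, if_neg]
          · intro hcon; rw [Fin.ext_iff] at hcon; simp at hcon; omega
          · rw [Fin.lt_def]; simp; omega
        simp [cf, hlt, hx'1, uf_one]
      have hhead : ((List.range (j.val + 1)).map (cf e x')).prod =
          ((List.range j.val).map (cf e x)).prod * upperFaceConfig (e j) (x j * z) := by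
        rw [List.range_succ, List.map_append, List.prod_append]
        congr 1
        · congr 1
          apply List.map_congr_left
          intro a ha
          rw [List.mem_range] at ha
          have hlt : a < n := by have := j.isLt; omega
          have : x' ⟨a, hlt⟩ = x ⟨a, hlt⟩ := by
            simp only [hx'def]
            rw [if_pos]
            rw [Fin.lt_def]
            exact ha
          simp [cf, hlt, this]
        · have hjn := j.isLt
          have hxj : x' ⟨j.val, hjn⟩ = x j * z := by
            simp only [hx'def]
            rw [if_neg (by simp [Fin.lt_def])]
            simp
          simp [cf, hjn, hxj]
      have hhead' : ((List.range (j.val + 1)).map (cf e x)).prod =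
          ((List.range j.val).map (cf e x)).prod * upperFaceConfig (e j) (x j) := by
        rw [List.range_succ, List.map_append, List.prod_append]
        congr 1
        have hjn := j.isLt
        simp [cf, hjn]
      rw [hsplit', htail, mul_one, hhead, hhead', mul_assoc, uf_mul]
    -- put things together
    have hmain : prodE e x * upperFaceConfig (e j) z = prodE e x' * L.prod := by
      rw [hsplit, mul_assoc, hswap, ← mul_assoc, hfront]
    rw [hmain]
    refine highmul L (fun a ha => hL a ha) _ ⟨x', hx', rfl⟩
    
lemma Pmem_one : Pmem Gf e 1 := by
  refine ⟨fun _ => 1, fun i => one_mem _, ?_⟩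
  symm
  apply List.prod_eq_one
  intro a ha
  obtain ⟨b, hb, rfl⟩ := List.mem_map.mp ha
  unfold cf
  split
  · exact uf_one _
  · rfl

lemma Pmem_mul_list (hf : IsGroupFiltration Gf) (he : ∀ i j : Fin n, e i ⊆ e j → i ≤ j)
    (hsurj : Function.Surjective e) (L : List ((Fin k → Bool) → G))
    (hL : ∀ a ∈ L, Gen Gf e a) {p} (hp : Pmem Gf e p) : Pmem Gf e (p * L.prod) := by
  induction L generalizing p with
  | nil => simpa using hp
  | cons a L ihL =>
    obtain ⟨j, z, hz, rfl⟩ := hL a List.mem_cons_self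
    rw [List.prod_cons, ← mul_assoc]
    refine ihL (fun b hb => hL b (List.mem_cons_of_mem _ hb)) ?_
    exact Pmem_mul_uf hf he hsurj n j (by omega) z hz p hp

lemma Pmem_mul (hf : IsGroupFiltration Gf) (he : ∀ i j : Fin n, e i ⊆ e j → i ≤ j)
    (hsurj : Function.Surjective e) {p q} (hp : Pmem Gf e p) (hq : Pmem Gf e q) :
    Pmem Gf e (p * q) := by
  obtain ⟨y, hy, rfl⟩ := hq
  refine Pmem_mul_list hf he hsurj _ ?_ hp
  intro a ha
  obtain ⟨b, hb, rfl⟩ := List.mem_map.mp ha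
  rw [List.mem_range] at hb
  exact ⟨⟨b, hb⟩, y ⟨b, hb⟩, hy _, by simp [cf, hb]⟩

lemma Pmem_inv (hf : IsGroupFiltration Gf) (he : ∀ i j : Fin n, e i ⊆ e j → i ≤ j)
    (hsurj : Function.Surjective e) {p} (hp : Pmem Gf e p) : Pmem Gf e p⁻¹ := by
  obtain ⟨x, hx, rfl⟩ := hp
  rw [prodE, List.prod_inv_reverse]
  have h1 : Pmem Gf e (1 * ((((List.range n).map (cf e x)).map fun a => a⁻¹).reverse).prod) := by
    refine Pmem_mul_list hf he hsurj _ ?_ Pmem_one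
    intro a ha
    rw [List.mem_reverse, List.map_map, List.mem_map] at ha
    obtain ⟨b, hb, rfl⟩ := ha
    rw [List.mem_range] at hb
    refine ⟨⟨b, hb⟩, (x ⟨b, hb⟩)⁻¹, inv_mem (hx _), ?_⟩
    simp [cf, hb, uf_inv]
  simpa using h1

lemma HK_le_Pmem (hf : IsGroupFiltration Gf) (e : Fin n ≃ Finset (Fin k))
    (he : ∀ i j : Fin n, e i ⊆ e j → i ≤ j) {g : (Fin k → Bool) → G}
    (hg : g ∈ hostKra Gf k) : Pmem Gf (⇑e) g := by
  have hsurj : Function.Surjective (⇑e) := e.surjective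
  refine Subgroup.closure_induction ?_ ?_ ?_ ?_ hg
  · rintro c ⟨S, z, hz, rfl⟩
    have hS : e (e.symm S) = S := e.apply_symm_apply S
    have h1 : Pmem Gf (⇑e) (1 * upperFaceConfig (e (e.symm S)) z) := by
      refine Pmem_mul_uf hf he hsurj n (e.symm S) (by omega) z ?_ 1 Pmem_one
      rw [hS]; exact hz
    rw [hS, one_mul] at h1
    exact h1
  · exact Pmem_one
  · exact fun p q _ _ hp hq => Pmem_mul hf he hsurj hp hq
  · exact fun p _ hp => Pmem_inv hf he hsurj hp

lemma Pmem_le_HK (e : Fin n → Finset (Fin k)) {x : Fin n → G} (hx : valid Gf e x) :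
    prodE e x ∈ hostKra Gf k := by
  rw [prodE]
  apply list_prod_mem
  intro c hc
  obtain ⟨b, hb, rfl⟩ := List.mem_map.mp hc
  rw [List.mem_range] at hb
  apply Subgroup.subset_closure
  exact ⟨e ⟨b, hb⟩, x ⟨b, hb⟩, hx _, by simp [cf, hb]⟩

end Filtered

end HKaux

/-- Fix an ordering `S_1 = ∅, …, S_{2^k} = [k]` of the subsets of `[k]`
respecting inclusion (given by a bijection `e`).  Every configuration `g ∈ G^{{0,1}^k}` has a
unique representation as the ordered product `∏ i, [x_i]_{F_{S_i}}`, and `g ∈ HK^k(G_•)` if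
and only if `x_i ∈ G_{|S_i|}` for all `i`. -/
theorem hostKra_unique_factorization {G : Type*} [Group G] (Gf : ℕ → Subgroup G)
    (hf : IsGroupFiltration Gf) (k : ℕ) (e : Fin (2 ^ k) ≃ Finset (Fin k))
    (he : ∀ i j, e i ⊆ e j → i ≤ j) (g : (Fin k → Bool) → G) :
    (∃! x : Fin (2 ^ k) → G,
        g = (List.ofFn fun i => upperFaceConfig (e i) (x i)).prod) ∧
    ∀ x : Fin (2 ^ k) → G,
      g = (List.ofFn fun i => upperFaceConfig (e i) (x i)).prod →
      (g ∈ hostKra Gf k ↔ ∀ i, x i ∈ Gf (e i).card) := by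
  have hsurj : Function.Surjective (⇑e) := e.surjective
  have hrepr := HKaux.exists_repr (⇑e) he hsurj g
  constructor
  · refine ⟨HKaux.slv (⇑e) g, ?_, ?_⟩
    · show g = (List.ofFn fun i => upperFaceConfig (e i) (HKaux.slv (⇑e) g i)).prod
      rw [HKaux.ofFn_eq]
      exact hrepr
    · intro y hy
      rw [HKaux.ofFn_eq] at hy
      exact HKaux.prodE_inj (⇑e) he (hy.symm.trans hrepr)
  · intro x hx
    rw [HKaux.ofFn_eq] at hx
    constructor
    · intro hg i
      obtain ⟨y, hy, hgy⟩ := HKaux.HK_le_Pmem hf e he hg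
      have hxy : x = y := HKaux.prodE_inj (⇑e) he (hx.symm.trans hgy)
      rw [hxy]
      exact hy i
    · intro hx'
      rw [hx]
      exact HKaux.Pmem_le_HK (⇑e) hx'
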